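/- arXiv:2310.10582 — 8 statements merged into one kernel-verified Lean document; each statement's English description precedes it below -/
import Mathlib

section
/- For every density matrix ν, every t ∈ ℝ and every α ∈ ℂ, the moment generating function of the two-times measurement entropy production satisfies 𝔉_{ν,t}(α) := ∑_{(b,a)∈𝒜×𝒜} λ_b^{α}·λ_a^{−α}·p_{ν,t}(b,a) = trace(ω_{−t}^{α}·ω^{−α}·ν̄). (Here λ_b^{α}·λ_a^{−α} = exp(−α·ℰ(b,a)).) -/
open Matrix NormedSpace
open scoped ComplexOrder

noncomputable section

/-- The two-times measurement statistics
`p_{ν,t}(b,a) = trace(exp(−itH)·P_a·ν·P_a·exp(itH)·P_b)`. -/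
def ttm {n 𝒜 : Type*} [Fintype n] [DecidableEq n]
    (H : Matrix n n ℂ) (P : 𝒜 → Matrix n n ℂ) (ν : Matrix n n ℂ) (t : ℝ) (b a : 𝒜) : ℂ :=
  (exp ((-(Complex.I * t)) • H) * P a * ν * P a * exp ((Complex.I * t) • H) * P b).trace

/-- The complex power `ω^z = ∑_a λ_a^z · P_a` of `ω = ∑_a λ_a · P_a`. -/
def omegaPow {n 𝒜 : Type*} [Fintype 𝒜] (lam : 𝒜 → ℝ) (P : 𝒜 → Matrix n n ℂ) (z : ℂ) :
    Matrix n n ℂ :=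
  ∑ a, ((lam a : ℂ) ^ z) • P a

/-- The pinching `ν̄ = ∑_a P_a·ν·P_a`. -/
def pinch {n 𝒜 : Type*} [Fintype n] [Fintype 𝒜]
    (P : 𝒜 → Matrix n n ℂ) (ν : Matrix n n ℂ) : Matrix n n ℂ :=
  ∑ a, P a * ν * P a

theorem mgf_eq_trace_cocycle
    {n 𝒜 : Type*} [Fintype n] [DecidableEq n] [Nonempty n]
    [Fintype 𝒜] [DecidableEq 𝒜] [Nonempty 𝒜]
    (H : Matrix n n ℂ) (hH : H.IsHermitian)
    (P : 𝒜 → Matrix n n ℂ)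
    (hPherm : ∀ a, (P a).IsHermitian)
    (hPidem : ∀ a, P a * P a = P a)
    (hPne : ∀ a, P a ≠ 0)
    (hPorth : ∀ a b, a ≠ b → P a * P b = 0)
    (hPsum : ∑ a, P a = 1)
    (lam : 𝒜 → ℝ) (hlampos : ∀ a, 0 < lam a)
    (hlaminj : Function.Injective lam)
    (hlamsum : ∑ a, (lam a : ℂ) * (P a).trace = 1)
    (ν : Matrix n n ℂ) (hν : ν.PosSemidef) (hνtr : ν.trace = 1)
    (t : ℝ) (α : ℂ) :
    ∑ x : 𝒜 × 𝒜, (lam x.1 : ℂ) ^ α * (lam x.2 : ℂ) ^ (-α) * ttm H P ν t x.1 x.2 =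
      (exp ((Complex.I * t) • H) * omegaPow lam P α * exp ((-(Complex.I * t)) • H) *
        omegaPow lam P (-α) * pinch P ν).trace := by
  set E := exp ((-(Complex.I * t)) • H) with hE
  set F := exp ((Complex.I * t) • H) with hF
  have hcollapse : omegaPow lam P (-α) * pinch P ν
      = ∑ a, ((lam a : ℂ) ^ (-α)) • (P a * ν * P a) := by
    unfold omegaPow pinch
    rw [Finset.sum_mul_sum]
    refine Finset.sum_congr rfl fun a _ => ?_
    rw [Finset.sum_eq_single a]
    · rw [Matrix.smul_mul, ← Matrix.mul_assoc, ← Matrix.mul_assoc, hPidem a]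
    · intro c _ hca
      rw [Matrix.smul_mul, ← Matrix.mul_assoc, ← Matrix.mul_assoc,
        hPorth a c (Ne.symm hca), Matrix.zero_mul, Matrix.zero_mul, smul_zero]
    · intro h; exact absurd (Finset.mem_univ a) h
  rw [Matrix.mul_assoc (F * omegaPow lam P α * E), hcollapse]
  unfold omegaPow
  rw [Fintype.sum_prod_type]
  simp only [Matrix.mul_sum, Matrix.sum_mul, Matrix.smul_mul, Matrix.mul_smul,
    Matrix.trace_sum, Matrix.trace_smul, smul_eq_mul, Finset.mul_sum]
  rw [Finset.sum_comm]
  refine Finset.sum_congr rfl fun b _ => Finset.sum_congr rfl fun a _ => ?_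
  unfold ttm
  rw [← hE, ← hF, Matrix.trace_mul_comm (F * P a * E) (P b * ν * P b)]
  simp only [Matrix.mul_assoc]
  rw [Matrix.trace_mul_comm E]
  simp only [Matrix.mul_assoc]
  ring
end
end

section
/- (Finite-dimensional form of Theorem 2(4).) Under the time-reversal invariance assumption, the entropy production distribution Q_{ω,t}(s) = ∑_{(b,a): ℰ(b,a)=s} p_{ω,t}(b,a) satisfies, for every t ∈ ℝ and every s ∈ ℝ: ∑_{(b,a)∈𝒜×𝒜, ℰ(b,a) = −s} p_{ω,t}(b,a) = exp(−s) · ∑_{(b,a)∈𝒜×𝒜, ℰ(b,a) = s} p_{ω,t}(b,a). (Equivalently, the reflected measure Q̄_{ω,t} = Q_{ω,t}∘r with r(s) = −s satisfies dQ̄_{ω,t}/dQ_{ω,t}(s) = e^{−s}.) -/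
open Matrix NormedSpace
open scoped ComplexOrder

noncomputable section

/-- Entrywise conjugation of a matrix commutes with the exponential. -/
lemma map_conj_exp {n : Type*} [Fintype n] [DecidableEq n] (B : Matrix n n ℂ) :
    (exp B).map (starRingEnd ℂ) = exp (B.map (starRingEnd ℂ)) := by
  have key : ∀ C : Matrix n n ℂ, C.map (starRingEnd ℂ) = Cᴴᵀ := by
    intro C; ext i j; simp [Matrix.conjTranspose_apply]
  rw [key, key B, Matrix.exp_transpose, Matrix.exp_conjTranspose]

/-- Key symmetry lemma (time-reversal invariance):
`tr(exp(w•H) P_a exp(z•H) P_b) = tr(exp(w•H) P_b exp(z•H) P_a)` when `w = star z`. -/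
lemma trace_exp_sym {n 𝒜 : Type*} [Fintype n] [DecidableEq n]
    (H : Matrix n n ℂ) (hH : H.IsHermitian)
    (P : 𝒜 → Matrix n n ℂ) (hPherm : ∀ a, (P a).IsHermitian)
    (U : Matrix n n ℂ) (hU1 : U * Uᴴ = 1) (hU2 : Uᴴ * U = 1)
    (hUH : U * H.map (starRingEnd ℂ) * Uᴴ = H)
    (hUP : ∀ a, U * (P a).map (starRingEnd ℂ) * Uᴴ = P a)
    (z w : ℂ) (hzw : star z = w) (a b : 𝒜) :
    (exp (w • H) * P a * exp (z • H) * P b).trace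
      = (exp (w • H) * P b * exp (z • H) * P a).trace := by
  have hsw : star w = z := by rw [← hzw, star_star]
  have hexpH : ∀ u : ℂ, (exp (u • H))ᴴ = exp (star u • H) := by
    intro u
    rw [← Matrix.exp_conjTranspose, Matrix.conjTranspose_smul, hH.eq]
  have hmapsmul : ∀ (u : ℂ) (A : Matrix n n ℂ),
      (u • A).map (starRingEnd ℂ) = star u • A.map (starRingEnd ℂ) := by
    intro u A; ext i j; simp
  have hUunit : IsUnit U := ⟨⟨U, Uᴴ, hU1, hU2⟩, rfl⟩
  have hUinv : U⁻¹ = Uᴴ := Matrix.inv_eq_right_inv hU1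
  set c : ℂ →+* ℂ := starRingEnd ℂ with hc
  set Φ : Matrix n n ℂ → Matrix n n ℂ := fun X => U * X.map c * Uᴴ with hΦ
  have phi_mul : ∀ X Y : Matrix n n ℂ, Φ (X * Y) = Φ X * Φ Y := by
    intro X Y
    simp only [hΦ]
    rw [show ((X * Y).map ⇑c : Matrix n n ℂ) = X.map ⇑c * Y.map ⇑c from Matrix.map_mul]
    rw [show U * X.map ⇑c * Uᴴ * (U * Y.map ⇑c * Uᴴ)
        = U * (X.map ⇑c * ((Uᴴ * U) * (Y.map ⇑c * Uᴴ))) from by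
      simp only [Matrix.mul_assoc]]
    rw [hU2, one_mul]
    simp only [Matrix.mul_assoc]
  have phi_trace : ∀ X : Matrix n n ℂ, (Φ X).trace = star X.trace := by
    intro X
    simp only [hΦ]
    rw [Matrix.trace_mul_comm (U * X.map ⇑c) Uᴴ, ← Matrix.mul_assoc, hU2, one_mul]
    simp [Matrix.trace, Matrix.diag, hc, map_sum]
  have phi_exp : ∀ u : ℂ, Φ (exp (u • H)) = exp (star u • H) := by
    intro u
    simp only [hΦ]
    rw [show ((exp (u • H)).map ⇑c : Matrix n n ℂ)
        = exp ((u • H).map (starRingEnd ℂ)) from map_conj_exp _]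
    rw [hmapsmul, ← hUinv, ← Matrix.exp_conj U _ hUunit]
    congr 1
    rw [Matrix.mul_smul, Matrix.smul_mul, hUinv, hUH]
  have cyc : ∀ A B C D : Matrix n n ℂ, (A * B * C * D).trace = (D * A * B * C).trace := by
    intro A B C D
    rw [Matrix.trace_mul_comm (A * B * C) D]
    simp only [Matrix.mul_assoc]
  set M : Matrix n n ℂ := exp (z • H) * P a * exp (w • H) * P b with hM
  have h1 : star M.trace = (exp (w • H) * P b * exp (z • H) * P a).trace := by
    rw [← Matrix.trace_conjTranspose, hM]
    simp only [Matrix.conjTranspose_mul]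
    rw [hexpH, hexpH, hzw, hsw, (hPherm a).eq, (hPherm b).eq]
    simp only [← Matrix.mul_assoc]
    exact cyc (P b) (exp (z • H)) (P a) (exp (w • H))
  have h2 : star M.trace = (exp (w • H) * P a * exp (z • H) * P b).trace := by
    rw [← phi_trace M, hM, phi_mul, phi_mul, phi_mul, phi_exp, phi_exp]
    simp only [hΦ]
    rw [hUP a, hUP b, hzw, hsw]
  rw [← h2, h1]

open Classical in
theorem entropy_production_fluctuation_relation
    {n 𝒜 : Type*} [Fintype n] [DecidableEq n] [Nonempty n]
    [Fintype 𝒜] [DecidableEq 𝒜] [Nonempty 𝒜]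
    (H : Matrix n n ℂ) (hH : H.IsHermitian)
    (P : 𝒜 → Matrix n n ℂ)
    (hPherm : ∀ a, (P a).IsHermitian)
    (hPidem : ∀ a, P a * P a = P a)
    (hPne : ∀ a, P a ≠ 0)
    (hPorth : ∀ a b, a ≠ b → P a * P b = 0)
    (hPsum : ∑ a, P a = 1)
    (lam : 𝒜 → ℝ) (hlampos : ∀ a, 0 < lam a)
    (hlaminj : Function.Injective lam)
    (hlamsum : ∑ a, (lam a : ℂ) * (P a).trace = 1)
    (hTR : ∃ U : Matrix n n ℂ, U * Uᴴ = 1 ∧ Uᴴ * U = 1 ∧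
      U * U.map (starRingEnd ℂ) = 1 ∧
      U * H.map (starRingEnd ℂ) * Uᴴ = H ∧
      ∀ a, U * (P a).map (starRingEnd ℂ) * Uᴴ = P a)
    (t : ℝ) (s : ℝ) :
    ∑ x : 𝒜 × 𝒜,
        (if Real.log (lam x.2) - Real.log (lam x.1) = -s then
          ttm H P (∑ c, (lam c : ℂ) • P c) t x.1 x.2 else 0) =
      (Real.exp (-s) : ℂ) *
        ∑ x : 𝒜 × 𝒜,
          (if Real.log (lam x.2) - Real.log (lam x.1) = s then
            ttm H P (∑ c, (lam c : ℂ) • P c) t x.1 x.2 else 0) := by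
  obtain ⟨U, hU1, hU2, hU3, hUH, hUP⟩ := hTR
  -- pinching of ω
  have pin : ∀ a, P a * (∑ c, (lam c : ℂ) • P c) * P a = (lam a : ℂ) • P a := by
    intro a
    rw [Finset.mul_sum, Finset.sum_mul, Finset.sum_eq_single a]
    · rw [Matrix.mul_smul, Matrix.smul_mul, hPidem a]
      rw [show (P a : Matrix n n ℂ) * P a = P a from hPidem a]
    · intro c _ hca
      rw [Matrix.mul_smul, Matrix.smul_mul, hPorth a c (Ne.symm hca), Matrix.zero_mul,
        smul_zero]
    · intro h; exact absurd (Finset.mem_univ a) h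
  -- ttm with ω
  have ttm_eq : ∀ b a : 𝒜, ttm H P (∑ c, (lam c : ℂ) • P c) t b a
      = (lam a : ℂ) *
        (exp ((-(Complex.I * t)) • H) * P a * exp ((Complex.I * t) • H) * P b).trace := by
    intro b a
    unfold ttm
    rw [show exp ((-(Complex.I * t)) • H) * P a * (∑ c, (lam c : ℂ) • P c) * P a
        = exp ((-(Complex.I * t)) • H) * (P a * (∑ c, (lam c : ℂ) • P c) * P a) from by
      simp only [Matrix.mul_assoc]]
    rw [pin a, Matrix.mul_smul, Matrix.smul_mul, Matrix.smul_mul, Matrix.trace_smul,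
      smul_eq_mul]
  -- symmetry
  have sym : ∀ a b : 𝒜,
      (exp ((-(Complex.I * t)) • H) * P a * exp ((Complex.I * t) • H) * P b).trace
    = (exp ((-(Complex.I * t)) • H) * P b * exp ((Complex.I * t) • H) * P a).trace := by
    intro a b
    exact trace_exp_sym H hH P hPherm U hU1 hU2 hUH hUP (Complex.I * t) (-(Complex.I * t))
      (by simp [Complex.ext_iff]) a b
  rw [Finset.mul_sum]
  refine Fintype.sum_equiv (Equiv.prodComm 𝒜 𝒜) _ _ ?_
  intro x
  obtain ⟨b, a⟩ := x
  simp only [Equiv.prodComm_apply, Prod.swap_prod_mk]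
  by_cases hcase : Real.log (lam a) - Real.log (lam b) = -s
  · have hcase' : Real.log (lam b) - Real.log (lam a) = s := by linarith
    rw [if_pos hcase]; simp only [hcase', ↓reduceIte]
    have hlam : (lam a : ℝ) = Real.exp (-s) * lam b := by
      have : lam a = Real.exp (Real.log (lam a)) := (Real.exp_log (hlampos a)).symm
      rw [this, show Real.log (lam a) = -s + Real.log (lam b) from by linarith,
        Real.exp_add, Real.exp_log (hlampos b)]
    rw [ttm_eq b a, ttm_eq a b, sym a b, hlam]
    push_cast
    ring
  · have hcase' : ¬ (Real.log (lam b) - Real.log (lam a) = s) := by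
      intro h; exact hcase (by linarith)
    rw [if_neg hcase]; simp only [hcase', ↓reduceIte, mul_zero]
end
end

section
/- Under the time-reversal invariance assumption, the transition weights are symmetric: for all t ∈ ℝ and all a, b ∈ 𝒜, trace(exp(−itH)·P_a·exp(itH)·P_b) = trace(exp(−itH)·P_b·exp(itH)·P_a). -/
open Matrix NormedSpace

theorem transition_weights_symmetric
    {n 𝒜 : Type*} [Fintype n] [DecidableEq n] [Nonempty n]
    [Fintype 𝒜] [DecidableEq 𝒜] [Nonempty 𝒜]
    (H : Matrix n n ℂ) (hH : H.IsHermitian)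
    (P : 𝒜 → Matrix n n ℂ)
    (hPherm : ∀ a, (P a).IsHermitian)
    (hPidem : ∀ a, P a * P a = P a)
    (hPne : ∀ a, P a ≠ 0)
    (hPorth : ∀ a b, a ≠ b → P a * P b = 0)
    (hPsum : ∑ a, P a = 1)
    (hTR : ∃ U : Matrix n n ℂ, U * Uᴴ = 1 ∧ Uᴴ * U = 1 ∧
      U * U.map (starRingEnd ℂ) = 1 ∧
      U * H.map (starRingEnd ℂ) * Uᴴ = H ∧
      ∀ a, U * (P a).map (starRingEnd ℂ) * Uᴴ = P a)
    (t : ℝ) (a b : 𝒜) :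
    (NormedSpace.exp ((-(Complex.I * t)) • H) * P a * NormedSpace.exp ((Complex.I * t) • H) * P b).trace =
      (NormedSpace.exp ((-(Complex.I * t)) • H) * P b * NormedSpace.exp ((Complex.I * t) • H) * P a).trace := by
  obtain ⟨U, hU1, hU2, hU3, hUH, hUP⟩ := hTR
  have hUunit : IsUnit U := ⟨⟨U, Uᴴ, hU1, hU2⟩, rfl⟩
  have hUinv : U⁻¹ = Uᴴ := Matrix.inv_eq_right_inv hU1
  -- conjTranspose of exp
  have hexpH : ∀ d : ℂ, starRingEnd ℂ d = -d → (NormedSpace.exp (d • H))ᴴ = NormedSpace.exp ((-d) • H) := by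
    intro d hd
    rw [← Matrix.exp_conjTranspose]
    congr 1
    rw [Matrix.conjTranspose_smul, hH.eq]
    exact congrArg (· • H) hd
  -- entrywise conjugation of exp
  have hmapB : ∀ B : Matrix n n ℂ, B.map (starRingEnd ℂ) = Bᴴᵀ := by
    intro B; ext i j; simp [Matrix.conjTranspose_apply]
  have hmapexp : ∀ A : Matrix n n ℂ,
      (NormedSpace.exp A).map (starRingEnd ℂ) = NormedSpace.exp (A.map (starRingEnd ℂ)) := by
    intro A
    rw [hmapB, hmapB, Matrix.exp_transpose, Matrix.exp_conjTranspose]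
  have hsmulmap : ∀ (d : ℂ) (A : Matrix n n ℂ),
      (d • A).map (starRingEnd ℂ) = (starRingEnd ℂ d) • A.map (starRingEnd ℂ) := by
    intro d A; ext i j; simp
  -- conjugating entrywise-conjugated exponentials with U
  have hexpU : ∀ d : ℂ, U * (NormedSpace.exp (d • H)).map (starRingEnd ℂ) * Uᴴ
      = NormedSpace.exp ((starRingEnd ℂ d) • H) := by
    intro d
    rw [hmapexp, hsmulmap]
    have h1 : U * NormedSpace.exp ((starRingEnd ℂ d) • H.map (starRingEnd ℂ)) * Uᴴ
        = NormedSpace.exp (U * ((starRingEnd ℂ d) • H.map (starRingEnd ℂ)) * Uᴴ) := by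
      rw [← hUinv]
      exact (Matrix.exp_conj U _ hUunit).symm
    rw [h1, Matrix.mul_smul, Matrix.smul_mul, hUH]
  -- trace of entrywise conjugate
  have htrmap : ∀ M : Matrix n n ℂ, (M.map (starRingEnd ℂ)).trace = star M.trace := by
    intro M
    rw [hmapB, Matrix.trace_transpose, Matrix.trace_conjTranspose]
  -- multiplicativity of conjugation inside U-sandwich
  have hins : ∀ X Y : Matrix n n ℂ, (U * X * Uᴴ) * (U * Y * Uᴴ) = U * (X * Y) * Uᴴ := by
    intro X Y
    calc (U * X * Uᴴ) * (U * Y * Uᴴ) = U * (X * ((Uᴴ * U) * Y)) * Uᴴ := by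
          simp only [Matrix.mul_assoc]
      _ = U * (X * Y) * Uᴴ := by rw [hU2, Matrix.one_mul, Matrix.mul_assoc]
  have cyc1 : ∀ A B C D : Matrix n n ℂ, (A * B * C * D).trace = (D * A * B * C).trace := by
    intro A B C D
    rw [Matrix.trace_mul_comm, ← Matrix.mul_assoc, ← Matrix.mul_assoc]
  -- Lemma 1: star of trace via conjTranspose
  have L1 : ∀ c : ℂ, starRingEnd ℂ c = -c → ∀ x y : 𝒜,
      star (NormedSpace.exp ((-c) • H) * P x * NormedSpace.exp (c • H) * P y).trace
        = (NormedSpace.exp (c • H) * P y * NormedSpace.exp ((-c) • H) * P x).trace := by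
    intro c hc x y
    have hc' : starRingEnd ℂ (-c) = -(-c) := by rw [map_neg, hc]
    rw [← Matrix.trace_conjTranspose]
    have e1 : (NormedSpace.exp ((-c) • H) * P x * NormedSpace.exp (c • H) * P y)ᴴ
        = P y * NormedSpace.exp ((-c) • H) * P x * NormedSpace.exp (c • H) := by
      simp only [Matrix.conjTranspose_mul, hexpH c hc, hexpH (-c) hc', neg_neg,
        (hPherm x).eq, (hPherm y).eq, Matrix.mul_assoc]
    rw [e1, cyc1]
  -- Lemma 2: star of trace via time reversal
  have L2 : ∀ c : ℂ, starRingEnd ℂ c = -c → ∀ x y : 𝒜,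
      star (NormedSpace.exp ((-c) • H) * P x * NormedSpace.exp (c • H) * P y).trace
        = (NormedSpace.exp (c • H) * P x * NormedSpace.exp ((-c) • H) * P y).trace := by
    intro c hc x y
    have hc' : starRingEnd ℂ (-c) = -(-c) := by rw [map_neg, hc]
    rw [← htrmap]
    have e2 : (U * ((NormedSpace.exp ((-c) • H) * P x * NormedSpace.exp (c • H) * P y).map (starRingEnd ℂ)) * Uᴴ).trace
        = ((NormedSpace.exp ((-c) • H) * P x * NormedSpace.exp (c • H) * P y).map (starRingEnd ℂ)).trace := by
      rw [Matrix.trace_mul_comm, ← Matrix.mul_assoc, hU2, Matrix.one_mul]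
    rw [← e2]
    have e3 : (NormedSpace.exp ((-c) • H) * P x * NormedSpace.exp (c • H) * P y).map (starRingEnd ℂ)
        = (NormedSpace.exp ((-c) • H)).map (starRingEnd ℂ) * (P x).map (starRingEnd ℂ)
          * (NormedSpace.exp (c • H)).map (starRingEnd ℂ) * (P y).map (starRingEnd ℂ) := by
      simp only [Matrix.map_mul]
    rw [e3]
    have e4 : U * ((NormedSpace.exp ((-c) • H)).map (starRingEnd ℂ) * (P x).map (starRingEnd ℂ)
          * (NormedSpace.exp (c • H)).map (starRingEnd ℂ) * (P y).map (starRingEnd ℂ)) * Uᴴ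
        = (U * (NormedSpace.exp ((-c) • H)).map (starRingEnd ℂ) * Uᴴ)
          * (U * (P x).map (starRingEnd ℂ) * Uᴴ)
          * (U * (NormedSpace.exp (c • H)).map (starRingEnd ℂ) * Uᴴ)
          * (U * (P y).map (starRingEnd ℂ) * Uᴴ) := by
      rw [hins, hins, hins]
    rw [e4, hexpU, hexpU, hUP, hUP, hc, hc', neg_neg]
  -- finish
  set c : ℂ := Complex.I * (t : ℂ) with hcdef
  have hc : starRingEnd ℂ c = -c := by
    simp only [hcdef, _root_.map_mul, Complex.conj_I, Complex.conj_ofReal]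
    ring
  have h1 := L1 c hc a b
  have h2 := L2 c hc b a
  have : star (NormedSpace.exp ((-c) • H) * P a * NormedSpace.exp (c • H) * P b).trace
      = star (NormedSpace.exp ((-c) • H) * P b * NormedSpace.exp (c • H) * P a).trace := h1.trans h2.symm
  calc (NormedSpace.exp ((-c) • H) * P a * NormedSpace.exp (c • H) * P b).trace
      = star (star (NormedSpace.exp ((-c) • H) * P a * NormedSpace.exp (c • H) * P b).trace) := (star_star _).symm
    _ = star (star (NormedSpace.exp ((-c) • H) * P b * NormedSpace.exp (c • H) * P a).trace) := by rw [this]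
    _ = (NormedSpace.exp ((-c) • H) * P b * NormedSpace.exp (c • H) * P a).trace := star_star _
end

section
/- (Decoherence by modular time-averaging; the finite-dimensional von Neumann ergodic average underlying formula (st-cyr).) For every matrix M ∈ Matrix n n ℂ, the Cesàro average of the modular evolution converges to the pinching: (1/R)·∫_0^R ω^{iθ}·M·ω^{−iθ} dθ tends, as R → ∞, to ∑_a P_a·M·P_a (convergence entrywise, equivalently in any norm on matrices). Here ω^{iθ} = ∑_a λ_a^{iθ}·P_a. -/
open Matrix NormedSpace
open scoped ComplexOrder

noncomputable section

/-- Cesàro average of `exp(iμθ)·c` tends to `c` if `μ = 0`, else to `0`. -/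
lemma cesaro_exp (μ : ℝ) (c : ℂ) :
    Filter.Tendsto (fun R : ℝ => (1 / R : ℝ) •
        ∫ θ in (0:ℝ)..R, Complex.exp (((μ : ℂ) * Complex.I) * θ) * c)
      Filter.atTop (nhds (if μ = 0 then c else 0)) := by
  by_cases hμ : μ = 0
  · subst hμ
    simp only [Complex.ofReal_zero, zero_mul, Complex.exp_zero, one_mul, if_pos rfl]
    have h : ∀ᶠ R in Filter.atTop, (1 / R : ℝ) • ∫ _θ in (0:ℝ)..R, c = c := by
      filter_upwards [Filter.eventually_gt_atTop (0:ℝ)] with R hR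
      rw [intervalIntegral.integral_const, smul_smul]
      rw [sub_zero, one_div, inv_mul_cancel₀ (ne_of_gt hR), one_smul]
    exact tendsto_const_nhds.congr' (h.mono fun R hR => hR.symm)
  · rw [if_neg hμ]
    have hc : ((μ : ℂ) * Complex.I) ≠ 0 := by
      simp [Complex.ext_iff, hμ]
    have hint : ∀ R : ℝ, (∫ θ in (0:ℝ)..R, Complex.exp (((μ : ℂ) * Complex.I) * θ) * c)
        = (Complex.exp (((μ : ℂ) * Complex.I) * R) - 1) / ((μ : ℂ) * Complex.I) * c := by
      intro R
      rw [intervalIntegral.integral_mul_const, integral_exp_mul_complex hc]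
      simp
    have habs : ∀ R : ℝ, ‖Complex.exp (((μ : ℂ) * Complex.I) * R)‖ = 1 := by
      intro R
      rw [Complex.norm_exp]
      simp [Complex.mul_re]
    apply squeeze_zero_norm'
      (a := fun R : ℝ => (1 / R) * (2 / ‖(μ:ℂ)*Complex.I‖ * ‖c‖))
    · filter_upwards [Filter.eventually_gt_atTop (0:ℝ)] with R hR
      rw [hint R, norm_smul]
      have h1 : ‖Complex.exp (((μ : ℂ) * Complex.I) * R) - 1‖ ≤ 2 := by
        calc ‖Complex.exp (((μ : ℂ) * Complex.I) * R) - 1‖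
            ≤ ‖Complex.exp (((μ : ℂ) * Complex.I) * R)‖ + ‖(1:ℂ)‖ := norm_sub_le _ _
          _ ≤ 2 := by rw [habs R]; norm_num
      have h2 : ‖(Complex.exp (((μ : ℂ) * Complex.I) * R) - 1) / ((μ : ℂ) * Complex.I) * c‖
          ≤ 2 / ‖(μ:ℂ)*Complex.I‖ * ‖c‖ := by
        rw [norm_mul, norm_div]
        gcongr
      have h3 : ‖(1 / R : ℝ)‖ = 1 / R := by
        rw [Real.norm_eq_abs, abs_of_pos (by positivity)]
      rw [h3]
      exact mul_le_mul_of_nonneg_left h2 (by positivity)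
    · have h1 : Filter.Tendsto (fun R : ℝ => 1 / R) Filter.atTop (nhds 0) := by
        simpa [one_div] using tendsto_inv_atTop_zero
      simpa using h1.mul_const (2 / ‖(μ:ℂ)*Complex.I‖ * ‖c‖)

theorem modular_time_average_tendsto_pinching
    {n 𝒜 : Type*} [Fintype n] [DecidableEq n] [Nonempty n]
    [Fintype 𝒜] [DecidableEq 𝒜] [Nonempty 𝒜]
    (P : 𝒜 → Matrix n n ℂ)
    (hPherm : ∀ a, (P a).IsHermitian)
    (hPidem : ∀ a, P a * P a = P a)
    (hPne : ∀ a, P a ≠ 0)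
    (hPorth : ∀ a b, a ≠ b → P a * P b = 0)
    (hPsum : ∑ a, P a = 1)
    (lam : 𝒜 → ℝ) (hlampos : ∀ a, 0 < lam a)
    (hlaminj : Function.Injective lam)
    (M : Matrix n n ℂ) (i j : n) :
    Filter.Tendsto
      (fun R : ℝ => (1 / R : ℝ) •
        ∫ θ in (0:ℝ)..R,
          (omegaPow lam P (Complex.I * θ) * M * omegaPow lam P (-(Complex.I * θ))) i j)
      Filter.atTop (nhds ((pinch P M) i j)) := by
  classical
  -- entrywise expansion of the integrand
  have key : ∀ θ : ℝ,
      (omegaPow lam P (Complex.I * θ) * M * omegaPow lam P (-(Complex.I * θ))) i j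
      = ∑ a, ∑ b,
          Complex.exp ((((Real.log (lam a) - Real.log (lam b)) : ℝ) * Complex.I) * θ)
          * ((P a * M * P b) i j) := by
    intro θ
    have hA : omegaPow lam P (Complex.I * θ) * M * omegaPow lam P (-(Complex.I * θ))
        = ∑ a, ∑ b, ((lam a : ℂ) ^ (Complex.I * (θ:ℂ)) * (lam b : ℂ) ^ (-(Complex.I * (θ:ℂ))))
            • (P a * M * P b) := by
      unfold omegaPow
      simp only [Finset.sum_mul, Finset.mul_sum, Finset.smul_sum, smul_mul_assoc,
        mul_smul_comm, smul_smul, mul_assoc]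
      rw [Finset.sum_comm]
      exact Finset.sum_congr rfl fun a _ => Finset.sum_congr rfl fun b _ => by rw [mul_comm]
    rw [hA, Matrix.sum_apply]
    refine Finset.sum_congr rfl fun a _ => ?_
    rw [Matrix.sum_apply]
    refine Finset.sum_congr rfl fun b _ => ?_
    rw [Matrix.smul_apply, smul_eq_mul]
    congr 1
    have ha : (lam a : ℂ) ≠ 0 := Complex.ofReal_ne_zero.mpr (ne_of_gt (hlampos a))
    have hb : (lam b : ℂ) ≠ 0 := Complex.ofReal_ne_zero.mpr (ne_of_gt (hlampos b))
    rw [Complex.cpow_def_of_ne_zero ha, Complex.cpow_def_of_ne_zero hb,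
      ← Complex.ofReal_log (le_of_lt (hlampos a)), ← Complex.ofReal_log (le_of_lt (hlampos b)),
      ← Complex.exp_add]
    congr 1
    push_cast
    ring
  -- each term is interval integrable
  have hcont : ∀ (μ : ℝ) (c : ℂ),
      Continuous fun θ : ℝ => Complex.exp (((μ : ℂ) * Complex.I) * θ) * c := by
    intro μ c
    fun_prop
  -- swap integral and finite sums
  have hswap : ∀ R : ℝ,
      (∫ θ in (0:ℝ)..R,
        (omegaPow lam P (Complex.I * θ) * M * omegaPow lam P (-(Complex.I * θ))) i j)
      = ∑ a, ∑ b, ∫ θ in (0:ℝ)..R,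
          Complex.exp ((((Real.log (lam a) - Real.log (lam b)) : ℝ) * Complex.I) * θ)
          * ((P a * M * P b) i j) := by
    intro R
    rw [intervalIntegral.integral_congr (g := fun θ => ∑ a, ∑ b,
        Complex.exp ((((Real.log (lam a) - Real.log (lam b)) : ℝ) * Complex.I) * θ)
        * ((P a * M * P b) i j)) (fun θ _ => key θ)]
    rw [intervalIntegral.integral_finset_sum]
    · exact Finset.sum_congr rfl fun a _ => intervalIntegral.integral_finset_sum
        (fun b _ => (hcont _ _).intervalIntegrable _ _)
    · intro a _
      exact (continuous_finset_sum _ fun b _ => hcont _ _).intervalIntegrable _ _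
  have hfun : ∀ R : ℝ, (1 / R : ℝ) •
      (∫ θ in (0:ℝ)..R,
        (omegaPow lam P (Complex.I * θ) * M * omegaPow lam P (-(Complex.I * θ))) i j)
      = ∑ a, ∑ b, (1 / R : ℝ) • ∫ θ in (0:ℝ)..R,
          Complex.exp ((((Real.log (lam a) - Real.log (lam b)) : ℝ) * Complex.I) * θ)
          * ((P a * M * P b) i j) := by
    intro R
    rw [hswap R, Finset.smul_sum]
    exact Finset.sum_congr rfl fun a _ => Finset.smul_sum
  -- criterion for vanishing of the frequency
  have hiff : ∀ a b : 𝒜, (Real.log (lam a) - Real.log (lam b) = 0) ↔ a = b := by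
    intro a b
    rw [sub_eq_zero]
    constructor
    · intro h
      apply hlaminj
      have h2 := congrArg Real.exp h
      rwa [Real.exp_log (hlampos a), Real.exp_log (hlampos b)] at h2
    · rintro rfl; rfl
  -- the limit
  have hlim : ((pinch P M) i j)
      = ∑ a, ∑ b, (if (Real.log (lam a) - Real.log (lam b)) = 0
          then ((P a * M * P b) i j) else 0) := by
    unfold pinch
    rw [Matrix.sum_apply]
    refine Finset.sum_congr rfl fun a _ => ?_
    rw [Finset.sum_eq_single a]
    · rw [if_pos (by rw [hiff]) ]
    · intro b _ hb
      rw [if_neg (fun h => hb ((hiff a b).mp h).symm)]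
    · intro h; exact absurd (Finset.mem_univ a) h
  simp only [funext hfun, hlim]
  refine tendsto_finset_sum _ fun a _ => tendsto_finset_sum _ fun b _ => ?_
  exact cesaro_exp (Real.log (lam a) - Real.log (lam b)) ((P a * M * P b) i j)
end
end

section
/- (Formula (st-cyr) for finite quantum systems.) For every density matrix ν, every t ∈ ℝ and every α ∈ ℂ: lim_{R→∞} (1/R)·∫_0^R trace( ν · ω^{iθ} · ω_{−t}^{α} · ω^{−α} · ω^{−iθ} ) dθ = ∑_{(b,a)∈𝒜×𝒜} λ_b^{α}·λ_a^{−α}·p_{ν,t}(b,a), i.e. the time-averaged expectation in the state ν of the modular-evolved Connes cocycle [Dω_{−t}:Dω]_α = ω_{−t}^{α}·ω^{−α} equals the moment generating function 𝔉_{ν,t}(α) of the two-times measurement entropy production. -/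
open Matrix NormedSpace
open scoped ComplexOrder

noncomputable section

open Filter

section aux
set_option linter.unusedSectionVars false
variable {n 𝒜 : Type*} [Fintype n] [DecidableEq n] [Fintype 𝒜] [DecidableEq 𝒜]

lemma avg_exp (c : ℝ) :
    Tendsto (fun R : ℝ => (1 / R : ℝ) • ∫ θ in (0:ℝ)..R, Complex.exp (c * θ * Complex.I))
      atTop (nhds (if c = 0 then 1 else 0)) := by
  by_cases hc : c = 0
  · rw [if_pos hc]; subst hc
    apply Tendsto.congr' (f₁ := fun _ : ℝ => (1:ℂ))
    · filter_upwards [eventually_gt_atTop (0:ℝ)] with R hR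
      simp only [Complex.ofReal_zero, zero_mul, Complex.exp_zero,
        intervalIntegral.integral_const, sub_zero, smul_smul]
      rw [one_div, inv_mul_cancel₀ (ne_of_gt hR), one_smul]
    · exact tendsto_const_nhds
  · rw [if_neg hc]
    have hd : (c : ℂ) * Complex.I ≠ 0 := by
      simp [Complex.I_ne_zero, Complex.ofReal_eq_zero, hc]
    apply squeeze_zero_norm' (a := fun R : ℝ => (2 / ‖(c:ℂ)*Complex.I‖) / R)
    · filter_upwards [eventually_gt_atTop (0:ℝ)] with R hR
      have hX : (∫ θ in (0:ℝ)..R, Complex.exp (c * θ * Complex.I))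
          = (Complex.exp ((c:ℂ)*Complex.I * (R:ℂ)) - Complex.exp ((c:ℂ)*Complex.I * ((0:ℝ):ℂ))) / ((c:ℂ)*Complex.I) := by
        rw [← integral_exp_mul_complex hd]
        congr 1; ext θ; ring_nf
      have h1 : ‖Complex.exp ((c:ℂ)*Complex.I * (R:ℂ)) - Complex.exp ((c:ℂ)*Complex.I* ((0:ℝ):ℂ))‖ ≤ 2 := by
        refine (norm_sub_le _ _).trans ?_
        have e1 : ‖Complex.exp ((c:ℂ)*Complex.I*(R:ℂ))‖ = 1 := by
          rw [show (c:ℂ)*Complex.I*(R:ℂ) = ((c*R : ℝ):ℂ) * Complex.I by push_cast; ring]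
          exact Complex.norm_exp_ofReal_mul_I _
        have e2 : ‖Complex.exp ((c:ℂ)*Complex.I* ((0:ℝ):ℂ))‖ = 1 := by simp
        rw [e1, e2]; norm_num
      have hRnorm : ‖(1/R : ℝ)‖ = 1/R := by
        rw [Real.norm_eq_abs, abs_of_pos (by positivity)]
      rw [hX, norm_smul, hRnorm, norm_div]
      calc 1/R * (‖Complex.exp ((c:ℂ)*Complex.I * (R:ℂ)) - Complex.exp ((c:ℂ)*Complex.I* ((0:ℝ):ℂ))‖ / ‖(c:ℂ)*Complex.I‖)
          ≤ 1/R * (2 / ‖(c:ℂ)*Complex.I‖) := by gcongr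
        _ = (2 / ‖(c:ℂ)*Complex.I‖) / R := by rw [one_div_mul_eq_div]
    · exact Tendsto.div_atTop tendsto_const_nhds tendsto_id

lemma proj_sum_mul (P : 𝒜 → Matrix n n ℂ)
    (hPidem : ∀ a, P a * P a = P a)
    (hPorth : ∀ a b, a ≠ b → P a * P b = 0)
    (u v : 𝒜 → ℂ) :
    (∑ a, u a • P a) * (∑ a, v a • P a) = ∑ a, (u a * v a) • P a := by
  rw [Finset.sum_mul_sum]
  refine Finset.sum_congr rfl fun a _ => ?_
  rw [Finset.sum_eq_single a]
  · rw [smul_mul_assoc, mul_smul_comm, smul_smul, hPidem a]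
  · intro b _ hb
    rw [smul_mul_assoc, mul_smul_comm, hPorth a b (Ne.symm hb), smul_zero, smul_zero]
  · intro h; exact absurd (Finset.mem_univ a) h

lemma trace_expand (P : 𝒜 → Matrix n n ℂ) (ν A : Matrix n n ℂ) (s w : 𝒜 → ℂ) :
    (ν * (∑ b, s b • P b) * A * (∑ a, w a • P a)).trace
      = ∑ p : 𝒜 × 𝒜, s p.1 * w p.2 * (ν * P p.1 * A * P p.2).trace := by
  simp only [Matrix.mul_sum, Matrix.sum_mul, Matrix.mul_smul, Matrix.smul_mul,
    Matrix.trace_sum, Matrix.trace_smul, smul_eq_mul, Fintype.sum_prod_type,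
    Finset.mul_sum]
  rw [Finset.sum_comm]
  exact Finset.sum_congr rfl fun b _ => Finset.sum_congr rfl fun a _ => by ring

lemma cpow_pos_eq_exp (x : ℝ) (hx : 0 < x) (z : ℂ) :
    (x:ℂ) ^ z = Complex.exp ((Real.log x : ℂ) * z) := by
  rw [Complex.cpow_def_of_ne_zero (by exact_mod_cast hx.ne'), Complex.ofReal_log hx.le]

end aux

theorem st_cyr_formula
    {n 𝒜 : Type*} [Fintype n] [DecidableEq n] [Nonempty n]
    [Fintype 𝒜] [DecidableEq 𝒜] [Nonempty 𝒜]
    (H : Matrix n n ℂ) (hH : H.IsHermitian)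
    (P : 𝒜 → Matrix n n ℂ)
    (hPherm : ∀ a, (P a).IsHermitian)
    (hPidem : ∀ a, P a * P a = P a)
    (hPne : ∀ a, P a ≠ 0)
    (hPorth : ∀ a b, a ≠ b → P a * P b = 0)
    (hPsum : ∑ a, P a = 1)
    (lam : 𝒜 → ℝ) (hlampos : ∀ a, 0 < lam a)
    (hlaminj : Function.Injective lam)
    (hlamsum : ∑ a, (lam a : ℂ) * (P a).trace = 1)
    (ν : Matrix n n ℂ) (hν : ν.PosSemidef) (hνtr : ν.trace = 1)
    (t : ℝ) (α : ℂ) :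
    Filter.Tendsto
      (fun R : ℝ => (1 / R : ℝ) •
        ∫ θ in (0:ℝ)..R,
          (ν * omegaPow lam P (Complex.I * θ) *
            (exp ((Complex.I * t) • H) * omegaPow lam P α * exp ((-(Complex.I * t)) • H)) *
            omegaPow lam P (-α) * omegaPow lam P (-(Complex.I * θ))).trace)
      Filter.atTop
      (nhds (∑ x : 𝒜 × 𝒜, (lam x.1 : ℂ) ^ α * (lam x.2 : ℂ) ^ (-α) * ttm H P ν t x.1 x.2)) := by
  classical
  set U := exp ((Complex.I * (t:ℂ)) • H) with hU
  set V := exp ((-(Complex.I * (t:ℂ))) • H) with hV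
  set A := U * omegaPow lam P α * V with hA
  set K : 𝒜 × 𝒜 → ℂ := fun p => (lam p.2 : ℂ) ^ (-α) * (ν * P p.1 * A * P p.2).trace with hK
  set c : 𝒜 × 𝒜 → ℝ := fun p => Real.log (lam p.1) - Real.log (lam p.2) with hc
  -- pointwise identity
  have key : ∀ θ : ℝ,
      (ν * omegaPow lam P (Complex.I * θ) * A * omegaPow lam P (-α) *
        omegaPow lam P (-(Complex.I * θ))).trace
      = ∑ p : 𝒜 × 𝒜, Complex.exp (c p * θ * Complex.I) * K p := by
    intro θ
    rw [mul_assoc (ν * omegaPow lam P (Complex.I * θ) * A)]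
    rw [show omegaPow lam P (-α) * omegaPow lam P (-(Complex.I * θ))
        = ∑ a, ((lam a : ℂ)^(-α) * (lam a : ℂ)^(-(Complex.I * θ))) • P a from
      proj_sum_mul P hPidem hPorth _ _]
    rw [show omegaPow lam P (Complex.I * θ) = ∑ b, ((lam b : ℂ)^(Complex.I * θ)) • P b from rfl]
    rw [trace_expand P ν A (fun b => (lam b : ℂ)^(Complex.I * (θ:ℂ)))
      (fun a => (lam a : ℂ)^(-α) * (lam a : ℂ)^(-(Complex.I * θ)))]
    refine Finset.sum_congr rfl fun p _ => ?_
    simp only [hK, hc]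
    rw [cpow_pos_eq_exp _ (hlampos p.1) (Complex.I * θ),
        cpow_pos_eq_exp _ (hlampos p.2) (-(Complex.I * θ))]
    have hexp : Complex.exp ((Real.log (lam p.1) : ℂ) * (Complex.I * θ)) *
        Complex.exp ((Real.log (lam p.2) : ℂ) * (-(Complex.I * θ)))
        = Complex.exp (((Real.log (lam p.1) - Real.log (lam p.2) : ℝ) : ℂ) * (θ:ℂ) * Complex.I) := by
      rw [← Complex.exp_add]; congr 1; push_cast; ring
    calc Complex.exp ((Real.log (lam p.1) : ℂ) * (Complex.I * θ)) *
          ((lam p.2 : ℂ)^(-α) * Complex.exp ((Real.log (lam p.2) : ℂ) * (-(Complex.I * θ)))) *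
          (ν * P p.1 * A * P p.2).trace
        = (Complex.exp ((Real.log (lam p.1) : ℂ) * (Complex.I * θ)) *
            Complex.exp ((Real.log (lam p.2) : ℂ) * (-(Complex.I * θ)))) *
          ((lam p.2 : ℂ)^(-α) * (ν * P p.1 * A * P p.2).trace) := by ring
      _ = Complex.exp (((Real.log (lam p.1) - Real.log (lam p.2) : ℝ) : ℂ) * (θ:ℂ) * Complex.I) *
          ((lam p.2 : ℂ)^(-α) * (ν * P p.1 * A * P p.2).trace) := by rw [hexp]
  -- integral manipulation
  have step2 : ∀ R : ℝ,
      ((1/R : ℝ) • ∫ θ in (0:ℝ)..R,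
        (ν * omegaPow lam P (Complex.I * θ) * A * omegaPow lam P (-α) *
          omegaPow lam P (-(Complex.I * θ))).trace)
      = ∑ p : 𝒜 × 𝒜, ((1/R : ℝ) • ∫ θ in (0:ℝ)..R, Complex.exp (c p * θ * Complex.I)) * K p := by
    intro R
    rw [intervalIntegral.integral_congr (g := fun θ : ℝ =>
      ∑ p : 𝒜 × 𝒜, Complex.exp (c p * θ * Complex.I) * K p) (fun θ _ => key θ)]
    rw [intervalIntegral.integral_finset_sum (fun p _ => by
      apply Continuous.intervalIntegrable; fun_prop)]
    rw [Finset.smul_sum]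
    refine Finset.sum_congr rfl fun p _ => ?_
    rw [intervalIntegral.integral_mul_const, smul_mul_assoc]
  -- tendsto
  have h' : Tendsto (fun R : ℝ => ∑ p : 𝒜 × 𝒜,
      ((1/R : ℝ) • ∫ θ in (0:ℝ)..R, Complex.exp (c p * θ * Complex.I)) * K p) atTop
      (nhds (∑ p : 𝒜 × 𝒜, (if c p = 0 then (1:ℂ) else 0) * K p)) :=
    tendsto_finset_sum _ (fun p _ => (avg_exp (c p)).mul_const (K p))
  -- identify limit value
  have hceq : ∀ p : 𝒜 × 𝒜, (c p = 0) ↔ p.1 = p.2 := by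
    intro p
    constructor
    · intro h
      have hl : Real.log (lam p.1) = Real.log (lam p.2) := by
        have := sub_eq_zero.mp h; exact this
      apply hlaminj
      calc lam p.1 = Real.exp (Real.log (lam p.1)) := (Real.exp_log (hlampos _)).symm
        _ = Real.exp (Real.log (lam p.2)) := by rw [hl]
        _ = lam p.2 := Real.exp_log (hlampos _)
    · intro h; simp only [hc, h, sub_self]
  have cyc : ∀ a b : 𝒜, (ν * P a * U * P b * V * P a).trace
      = (V * P a * ν * P a * U * P b).trace := by
    intro a b
    rw [show ν * P a * U * P b * V * P a = (ν * P a * U * P b) * (V * P a) by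
      simp only [mul_assoc]]
    rw [Matrix.trace_mul_comm]
    rw [show (V * P a) * (ν * P a * U * P b) = V * P a * ν * P a * U * P b by
      simp only [mul_assoc]]
  have hKdiag : ∀ a : 𝒜, K (a, a)
      = ∑ b, (lam b : ℂ)^α * ((lam a : ℂ)^(-α) * ttm H P ν t b a) := by
    intro a
    simp only [hK]
    have hexpand : ν * P a * A * P a
        = ∑ b, ((lam b : ℂ)^α) • (ν * P a * U * P b * V * P a) := by
      rw [hA, show omegaPow lam P α = ∑ b, ((lam b : ℂ)^α) • P b from rfl]
      simp only [Matrix.mul_sum, Matrix.sum_mul, Matrix.mul_smul, Matrix.smul_mul, mul_assoc]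
    rw [hexpand, Matrix.trace_sum, Finset.mul_sum]
    refine Finset.sum_congr rfl fun b _ => ?_
    rw [Matrix.trace_smul, smul_eq_mul, cyc a b]
    rw [show ttm H P ν t b a = (V * P a * ν * P a * U * P b).trace from rfl]
    ring
  have hval : (∑ p : 𝒜 × 𝒜, (if c p = 0 then (1:ℂ) else 0) * K p)
      = ∑ x : 𝒜 × 𝒜, (lam x.1 : ℂ) ^ α * (lam x.2 : ℂ) ^ (-α) * ttm H P ν t x.1 x.2 := by
    have e1 : (∑ p : 𝒜 × 𝒜, (if c p = 0 then (1:ℂ) else 0) * K p)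
        = ∑ p : 𝒜 × 𝒜, (if p.1 = p.2 then K p else 0) := by
      refine Finset.sum_congr rfl fun p _ => ?_
      by_cases h : p.1 = p.2
      · rw [if_pos ((hceq p).mpr h), if_pos h, one_mul]
      · rw [if_neg (fun hc0 => h ((hceq p).mp hc0)), if_neg h, zero_mul]
    rw [e1, Fintype.sum_prod_type]
    have e2 : ∀ b : 𝒜, (∑ a : 𝒜, if b = a then K (b, a) else 0) = K (b, b) := by
      intro b
      rw [Finset.sum_ite_eq]
      simp
    simp only [e2, hKdiag]
    rw [Finset.sum_comm, Fintype.sum_prod_type]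
    exact Finset.sum_congr rfl fun b _ => Finset.sum_congr rfl fun a _ => by ring
  rw [← hval]
  exact h'.congr (fun R => (step2 R).symm)
end
end

section
/- (Finite-dimensional form of Proposition 7(5): 𝒰*·Δ_{ω_{−t}|ω}·𝒰 = Δ_{ω_t|ω}.) Suppose U is a unitary matrix with U·conj(U) = 1, U·conj(H)·U* = H and U·conj(ω)·U* = ω. Then for every t ∈ ℝ and every matrix X ∈ Matrix n n ℂ: U · conj( ω_{−t} · (U·conj(X)·U*) · ω^{−1} ) · U* = ω_t · X · ω^{−1}, where the antiunitary 𝒰 : X ↦ U·conj(X)·U* implements time reversal and Δ_{ν|ρ} acts on matrices by X ↦ ν·X·ρ^{−1}. -/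
open Matrix NormedSpace
open scoped ComplexOrder

private lemma expMapConj' {n : Type*} [Fintype n] [DecidableEq n] (A : Matrix n n ℂ) :
    (exp A).map (starRingEnd ℂ) = exp (A.map (starRingEnd ℂ)) := by
  have h1 : ∀ B : Matrix n n ℂ, B.map (starRingEnd ℂ) = (Bᴴ)ᵀ := by
    intro B; ext i j; simp [conjTranspose_apply]
  rw [h1, h1, ← Matrix.exp_conjTranspose, ← Matrix.exp_transpose]

theorem time_reversal_relative_modular
    {n : Type*} [Fintype n] [DecidableEq n] [Nonempty n]
    (H : Matrix n n ℂ) (hH : H.IsHermitian)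
    (ω : Matrix n n ℂ) (hω : ω.PosDef) (hωtr : ω.trace = 1)
    (U : Matrix n n ℂ) (hU1 : U * Uᴴ = 1) (hU2 : Uᴴ * U = 1)
    (hUc : U * U.map (starRingEnd ℂ) = 1)
    (hUH : U * H.map (starRingEnd ℂ) * Uᴴ = H)
    (hUω : U * ω.map (starRingEnd ℂ) * Uᴴ = ω)
    (t : ℝ) (X : Matrix n n ℂ) :
    U *
        ((exp ((Complex.I * t) • H) * ω * exp ((-(Complex.I * t)) • H)) *
            (U * X.map (starRingEnd ℂ) * Uᴴ) * ω⁻¹).map (starRingEnd ℂ) *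
        Uᴴ =
      (exp ((-(Complex.I * t)) • H) * ω * exp ((Complex.I * t) • H)) * X * ω⁻¹ := by
  set c := starRingEnd ℂ
  have hUunit : IsUnit U := ⟨⟨U, Uᴴ, hU1, hU2⟩, rfl⟩
  have hUinv : U⁻¹ = Uᴴ := Matrix.inv_eq_left_inv hU2
  have hcU : U.map c = Uᴴ := by
    have := Matrix.inv_eq_right_inv hUc
    rw [← this, hUinv]
  have hcc : ∀ A : Matrix n n ℂ, (A.map c).map c = A := by
    intro A; ext i j; simp [c]
  have hcUH : Uᴴ.map c = U := by
    rw [← hcU, hcc]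
  -- sandwich combination
  have sand : ∀ A B : Matrix n n ℂ, (U * A * Uᴴ) * (U * B * Uᴴ) = U * (A * B) * Uᴴ := by
    intro A B
    simp only [mul_assoc]
    rw [← mul_assoc Uᴴ U, hU2, one_mul]
  -- map of scaled Hamiltonian
  have hsm : ∀ s : ℂ, ((s • H).map c) = c s • H.map c := by
    intro s; ext i j; simp [c, Matrix.map_apply]
  have hexp : ∀ s : ℂ, U * (exp (s • H)).map c * Uᴴ = exp (c s • H) := by
    intro s
    rw [expMapConj', hsm, ← hUinv,
      ← Matrix.exp_conj U (c s • H.map ⇑c) hUunit]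
    congr 1
    rw [mul_smul_comm, smul_mul_assoc, hUinv, hUH]
  have hct : ∀ s : ℝ, c (Complex.I * s) = -(Complex.I * s) := by
    intro s; simp [c, Complex.conj_ofReal]
  have s1 : U * (exp ((Complex.I * t) • H)).map c * Uᴴ
      = exp ((-(Complex.I * t)) • H) := by rw [hexp, hct]
  have s3 : U * (exp ((-(Complex.I * t)) • H)).map c * Uᴴ
      = exp ((Complex.I * t) • H) := by
    rw [hexp]; congr 2; rw [map_neg, hct]; ring
  have s4 : U * (Uᴴ * X * U) * Uᴴ = X := by
    rw [← mul_assoc, ← mul_assoc, hU1, one_mul, mul_assoc, hU1, mul_one]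
  have s5 : U * (ω⁻¹).map c * Uᴴ = ω⁻¹ := by
    symm
    apply Matrix.inv_eq_left_inv
    calc (U * (ω⁻¹).map c * Uᴴ) * ω
        = (U * (ω⁻¹).map c * Uᴴ) * (U * ω.map c * Uᴴ) := by rw [hUω]
      _ = U * ((ω⁻¹).map c * ω.map c) * Uᴴ := sand _ _
      _ = U * ((ω⁻¹ * ω).map c) * Uᴴ := by rw [Matrix.map_mul]
      _ = 1 := by
          rw [Matrix.nonsing_inv_mul ω ((Matrix.isUnit_iff_isUnit_det ω).mp hω.isUnit),
            Matrix.map_one c (map_zero c) (map_one c), mul_one, hU1]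
  simp only [Matrix.map_mul, hcU, hcUH, hcc]
  rw [← sand, ← sand, ← sand, ← sand, s1, hUω, s3, s4, s5]
end

section
/- (Domination lemma underlying the finite-dimensional analog of Theorem 4(2).) Let ν₁, ν₂ be density matrices and c ≥ 0 a real number such that c·ν̄₂ − ν̄₁ is positive semidefinite, where ν̄ = ∑_a P_a·ν·P_a denotes the pinching. Then for every t ∈ ℝ and all a, b ∈ 𝒜, the (real, nonnegative) values of the two-times measurement statistics satisfy p_{ν₁,t}(b,a) ≤ c·p_{ν₂,t}(b,a). -/
open Matrix NormedSpace
open scoped ComplexOrder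

noncomputable section

lemma psd_trace_nonneg {n : Type*} [Fintype n] [DecidableEq n] {A : Matrix n n ℂ}
    (hA : A.PosSemidef) : 0 ≤ A.trace := by
  rw [Matrix.trace]
  apply Finset.sum_nonneg
  intro i _
  exact hA.diag_nonneg

theorem pinching_domination
    {n 𝒜 : Type*} [Fintype n] [DecidableEq n] [Nonempty n]
    [Fintype 𝒜] [DecidableEq 𝒜] [Nonempty 𝒜]
    (H : Matrix n n ℂ) (hH : H.IsHermitian)
    (P : 𝒜 → Matrix n n ℂ)
    (hPherm : ∀ a, (P a).IsHermitian)
    (hPidem : ∀ a, P a * P a = P a)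
    (hPne : ∀ a, P a ≠ 0)
    (hPorth : ∀ a b, a ≠ b → P a * P b = 0)
    (hPsum : ∑ a, P a = 1)
    (ν₁ ν₂ : Matrix n n ℂ)
    (hν₁ : ν₁.PosSemidef) (hν₁tr : ν₁.trace = 1)
    (hν₂ : ν₂.PosSemidef) (hν₂tr : ν₂.trace = 1)
    (c : ℝ) (hc : 0 ≤ c)
    (hdom : ((c : ℂ) • pinch P ν₂ - pinch P ν₁).PosSemidef)
    (t : ℝ) (a b : 𝒜) :
    (ttm H P ν₁ t b a).re ≤ c * (ttm H P ν₂ t b a).re := by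
  set E₁ := exp ((-(Complex.I * t)) • H) with hE₁
  set E₂ := exp ((Complex.I * t) • H) with hE₂
  have hEconj : E₁ᴴ = E₂ := by
    rw [hE₁, ← Matrix.exp_conjTranspose]
    congr 1
    rw [Matrix.conjTranspose_smul, hH.eq]
    congr 1
    simp [Complex.ext_iff]
  set B := P b * E₁ * P a with hB
  have hBconj : Bᴴ = P a * E₂ * P b := by
    rw [hB]
    simp [Matrix.conjTranspose_mul, (hPherm a).eq, (hPherm b).eq, hEconj, mul_assoc]
  have key : ∀ ν : Matrix n n ℂ, (B * pinch P ν * Bᴴ).trace = ttm H P ν t b a := by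
    intro ν
    have hpinch : P a * pinch P ν * P a = P a * ν * P a := by
      rw [pinch, Finset.mul_sum, Finset.sum_mul]
      rw [Finset.sum_eq_single a]
      · rw [show P a * (P a * ν * P a) * P a = (P a * P a) * ν * (P a * P a) by noncomm_ring,
          hPidem a]
      · intro x _ hx
        rw [show P a * (P x * ν * P x) * P a = (P a * P x) * ν * (P x * P a) by noncomm_ring,
          hPorth a x (Ne.symm hx)]
        simp
      · simp
    have h1 : B * pinch P ν * Bᴴ = P b * (E₁ * P a * ν * P a * E₂ * P b) := by
      rw [hBconj, hB]
      calc P b * E₁ * P a * pinch P ν * (P a * E₂ * P b)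
          = P b * (E₁ * (P a * pinch P ν * P a) * E₂ * P b) := by noncomm_ring
        _ = P b * (E₁ * (P a * ν * P a) * E₂ * P b) := by rw [hpinch]
        _ = P b * (E₁ * P a * ν * P a * E₂ * P b) := by noncomm_ring
    rw [h1, ttm, ← hE₁, ← hE₂, Matrix.trace_mul_comm,
      show E₁ * P a * ν * P a * E₂ * P b * P b
        = E₁ * P a * ν * P a * E₂ * (P b * P b) from by noncomm_ring, hPidem b]
  have hpsd := hdom.mul_mul_conjTranspose_same B
  have htr := psd_trace_nonneg hpsd
  have heq : (B * ((c : ℂ) • pinch P ν₂ - pinch P ν₁) * Bᴴ).trace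
      = (c : ℂ) * ttm H P ν₂ t b a - ttm H P ν₁ t b a := by
    rw [Matrix.mul_sub, Matrix.sub_mul, Matrix.trace_sub, Matrix.mul_smul,
      Matrix.smul_mul, Matrix.trace_smul, key, key, smul_eq_mul]
  rw [heq] at htr
  have hre := Complex.le_def.mp htr |>.1
  simp only [Complex.zero_re, Complex.sub_re, Complex.mul_re, Complex.ofReal_re,
    Complex.ofReal_im] at hre
  linarith
end
end

section
/- (Finite-dimensional analog of Theorem 4(2), estimates (est-1) and (est-2).) In the bipartite setup, let ν_S be a density matrix on Matrix n_S n_S ℂ and set ν = ν_S ⊗ ω_R. Then for every t ∈ ℝ and all a, b ∈ 𝒜: p_{ν,t}(b,a) ≤ N · p_{ω,t}(b,a) (as nonnegative reals); and if moreover there is γ > 0 such that ν_S − γ·1 is positive semidefinite, then γ·N · p_{ω,t}(b,a) ≤ p_{ν,t}(b,a). -/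
open Matrix NormedSpace
open scoped ComplexOrder

noncomputable section

section AuxLemmas

open Kronecker
open scoped MatrixOrder

variable {m n : Type*} [Fintype m] [Fintype n]

lemma psd_trace_re_nonneg {M : Matrix n n ℂ} (hM : M.PosSemidef) : 0 ≤ M.trace.re := by
  have h : ∀ i, 0 ≤ (M i i).re := by
    intro i
    classical
    exact (Complex.le_def.mp hM.diag_nonneg).1
  rw [Matrix.trace]
  rw [Complex.re_sum]
  exact Finset.sum_nonneg fun i _ => h i

lemma trace_mul_psd_re_nonneg {A B : Matrix n n ℂ} (hA : A.PosSemidef) (hB : B.PosSemidef) :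
    0 ≤ (A * B).trace.re := by
  obtain ⟨C, rfl⟩ := (show ∃ C : Matrix _ _ ℂ, A = Cᴴ * C by classical exact (CStarAlgebra.nonneg_iff_eq_star_mul_self.mp hA.nonneg))
  have h : (Cᴴ * C * B).trace = (C * B * Cᴴ).trace := by
    rw [mul_assoc, Matrix.trace_mul_comm]
  rw [h]
  exact psd_trace_re_nonneg (hB.mul_mul_conjTranspose_same C)

lemma kron_conjTranspose [DecidableEq m] [DecidableEq n]
    (A : Matrix m m ℂ) (B : Matrix n n ℂ) : (A ⊗ₖ B)ᴴ = Aᴴ ⊗ₖ Bᴴ := by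
  ext ⟨i, j⟩ ⟨k, l⟩
  simp [Matrix.conjTranspose_apply, Matrix.kroneckerMap_apply, star_mul', mul_comm]

lemma kron_posSemidef [DecidableEq m] [DecidableEq n]
    {A : Matrix m m ℂ} {B : Matrix n n ℂ} (hA : A.PosSemidef) (hB : B.PosSemidef) :
    (A ⊗ₖ B).PosSemidef := by
  obtain ⟨C, rfl⟩ := (show ∃ C : Matrix _ _ ℂ, A = Cᴴ * C by classical exact (CStarAlgebra.nonneg_iff_eq_star_mul_self.mp hA.nonneg))
  obtain ⟨D, rfl⟩ := (show ∃ C : Matrix _ _ ℂ, B = Cᴴ * C by classical exact (CStarAlgebra.nonneg_iff_eq_star_mul_self.mp hB.nonneg))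
  rw [Matrix.mul_kronecker_mul, ← kron_conjTranspose]
  exact Matrix.posSemidef_conjTranspose_mul_self _

lemma one_sub_posSemidef [DecidableEq n] {ν : Matrix n n ℂ}
    (hν : ν.PosSemidef) (htr : ν.trace = 1) : ((1 : Matrix n n ℂ) - ν).PosSemidef := by
  have hH := hν.1
  have hspec := hH.spectral_theorem
  set U : Matrix n n ℂ := (hH.eigenvectorUnitary : Matrix n n ℂ) with hU
  rw [Unitary.conjStarAlgAut_apply, ← hU] at hspec
  have hUU : U * star U = 1 := (Matrix.mem_unitaryGroup_iff).mp hH.eigenvectorUnitary.2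
  have hUU' : star U * U = 1 := (Matrix.mem_unitaryGroup_iff').mp hH.eigenvectorUnitary.2
  have hsum : ∑ i, hH.eigenvalues i = 1 := by
    have : ν.trace = ∑ i, (hH.eigenvalues i : ℂ) := by
      conv_lhs => rw [hspec]
      rw [Matrix.trace_mul_cycle, hUU', one_mul]
      simp [Matrix.trace_diagonal]
    rw [htr] at this
    have := this.symm
    push_cast at this
    exact_mod_cast this
  have hle : ∀ i, hH.eigenvalues i ≤ 1 := by
    intro i
    rw [← hsum]
    exact Finset.single_le_sum (f := hH.eigenvalues)
      (fun j _ => hν.eigenvalues_nonneg j) (Finset.mem_univ i)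
  have h1 : (1 : Matrix n n ℂ) - ν =
      U * (Matrix.diagonal fun i => (1 : ℂ) - (hH.eigenvalues i : ℂ)) * star U := by
    have hone : (1 : Matrix n n ℂ) = U * 1 * star U := by rw [mul_one, hUU]
    conv_lhs => rw [hone, hspec]
    rw [← Matrix.sub_mul, ← Matrix.mul_sub]
    congr 1
    congr 1
    ext i j
    by_cases h : i = j <;> simp [Matrix.diagonal, h]
  rw [h1, Matrix.star_eq_conjTranspose]
  refine Matrix.PosSemidef.mul_mul_conjTranspose_same ?_ U
  refine Matrix.PosSemidef.diagonal fun i => ?_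
  have h1i : (hH.eigenvalues i : ℂ) ≤ 1 := by exact_mod_cast hle i
  simpa using sub_nonneg.mpr h1i

lemma sub_kron [DecidableEq m] (A B : Matrix m m ℂ) (C : Matrix n n ℂ) :
    (A - B) ⊗ₖ C = A ⊗ₖ C - B ⊗ₖ C := by
  ext ⟨i, j⟩ ⟨k, l⟩
  simp [Matrix.kroneckerMap_apply, sub_mul]

end AuxLemmas

open Kronecker in
theorem bipartite_2TMEP_estimates
    {nS nR 𝒜 : Type*} [Fintype nS] [DecidableEq nS] [Nonempty nS]
    [Fintype nR] [DecidableEq nR] [Nonempty nR]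
    [Fintype 𝒜] [DecidableEq 𝒜] [Nonempty 𝒜]
    (H : Matrix (nS × nR) (nS × nR) ℂ) (hH : H.IsHermitian)
    (PR : 𝒜 → Matrix nR nR ℂ)
    (hPherm : ∀ a, (PR a).IsHermitian)
    (hPidem : ∀ a, PR a * PR a = PR a)
    (hPne : ∀ a, PR a ≠ 0)
    (hPorth : ∀ a b, a ≠ b → PR a * PR b = 0)
    (hPsum : ∑ a, PR a = 1)
    (μ : 𝒜 → ℝ) (hμpos : ∀ a, 0 < μ a) (hμinj : Function.Injective μ)
    (hωRtr : (∑ a, (μ a : ℂ) • PR a).trace = 1)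
    (νS : Matrix nS nS ℂ) (hνS : νS.PosSemidef) (hνStr : νS.trace = 1)
    (t : ℝ) (a b : 𝒜) :
    (ttm H (fun c => (1 : Matrix nS nS ℂ) ⊗ₖ PR c)
        (νS ⊗ₖ (∑ c, (μ c : ℂ) • PR c)) t b a).re ≤
      (Fintype.card nS : ℝ) *
        (ttm H (fun c => (1 : Matrix nS nS ℂ) ⊗ₖ PR c)
          (((Fintype.card nS : ℂ))⁻¹ • ((1 : Matrix nS nS ℂ) ⊗ₖ (∑ c, (μ c : ℂ) • PR c)))
          t b a).re ∧
    ∀ γ : ℝ, 0 < γ → (νS - (γ : ℂ) • 1).PosSemidef →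
      γ * (Fintype.card nS : ℝ) *
          (ttm H (fun c => (1 : Matrix nS nS ℂ) ⊗ₖ PR c)
            (((Fintype.card nS : ℂ))⁻¹ • ((1 : Matrix nS nS ℂ) ⊗ₖ (∑ c, (μ c : ℂ) • PR c)))
            t b a).re ≤
        (ttm H (fun c => (1 : Matrix nS nS ℂ) ⊗ₖ PR c)
          (νS ⊗ₖ (∑ c, (μ c : ℂ) • PR c)) t b a).re := by
  classical
  set ωR : Matrix nR nR ℂ := ∑ c, (μ c : ℂ) • PR c with hωR
  set E : Matrix (nS × nR) (nS × nR) ℂ := exp ((-(Complex.I * t)) • H) with hE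
  set Pb : Matrix (nS × nR) (nS × nR) ℂ := (1 : Matrix nS nS ℂ) ⊗ₖ PR b with hPb
  -- the adjoint relation
  have hFE : exp ((Complex.I * t) • H) = Eᴴ := by
    rw [hE, ← Matrix.exp_conjTranspose]
    congr 1
    rw [Matrix.conjTranspose_smul, hH.eq]
    congr 1
    simp
  -- projection pinching
  have hproj : PR a * ωR * PR a = (μ a : ℂ) • PR a := by
    rw [hωR, Finset.mul_sum, Finset.sum_mul]
    rw [Finset.sum_eq_single a]
    · rw [mul_smul_comm, smul_mul_assoc, hPidem a, hPidem a]
    · intro c _ hc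
      rw [mul_smul_comm, smul_mul_assoc, hPorth a c (Ne.symm hc), zero_mul, smul_zero]
    · intro h; exact absurd (Finset.mem_univ a) h
  -- PSD facts
  have hPRpsd : ∀ c, (PR c).PosSemidef := by
    intro c
    have h : (PR c)ᴴ * PR c = PR c := by rw [(hPherm c).eq]; exact hPidem c
    exact h ▸ Matrix.posSemidef_conjTranspose_mul_self (PR c)
  have hPbpsd : Pb.PosSemidef := kron_posSemidef Matrix.PosSemidef.one (hPRpsd b)
  -- generic ttm evaluation
  have httm : ∀ (X : Matrix nS nS ℂ) (k : ℂ),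
      ttm H (fun c => (1 : Matrix nS nS ℂ) ⊗ₖ PR c) (k • (X ⊗ₖ ωR)) t b a =
        (k * μ a) * (E * (X ⊗ₖ PR a) * Eᴴ * Pb).trace := by
    intro X k
    unfold ttm
    beta_reduce
    rw [hFE]
    have hpinch : ((1 : Matrix nS nS ℂ) ⊗ₖ PR a) * (k • (X ⊗ₖ ωR)) *
        ((1 : Matrix nS nS ℂ) ⊗ₖ PR a) = (k * μ a) • (X ⊗ₖ PR a) := by
      rw [mul_smul_comm, smul_mul_assoc, ← Matrix.mul_kronecker_mul,
        ← Matrix.mul_kronecker_mul, one_mul, mul_one, hproj, Matrix.kronecker_smul,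
        smul_smul]
    have h : E * ((1 : Matrix nS nS ℂ) ⊗ₖ PR a) * (k • (X ⊗ₖ ωR)) *
          ((1 : Matrix nS nS ℂ) ⊗ₖ PR a) * Eᴴ * Pb =
        E * (((1 : Matrix nS nS ℂ) ⊗ₖ PR a) * (k • (X ⊗ₖ ωR)) *
          ((1 : Matrix nS nS ℂ) ⊗ₖ PR a)) * Eᴴ * Pb := by
      simp only [mul_assoc]
    rw [← hE, ← hPb, h, hpinch, mul_smul_comm, smul_mul_assoc, smul_mul_assoc,
      Matrix.trace_smul, smul_eq_mul]
  -- monotonicity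
  have hmono : ∀ X Y : Matrix nS nS ℂ, (Y - X).PosSemidef →
      (E * (X ⊗ₖ PR a) * Eᴴ * Pb).trace.re ≤ (E * (Y ⊗ₖ PR a) * Eᴴ * Pb).trace.re := by
    intro X Y hXY
    have hdiff : E * ((Y - X) ⊗ₖ PR a) * Eᴴ * Pb =
        E * (Y ⊗ₖ PR a) * Eᴴ * Pb - E * (X ⊗ₖ PR a) * Eᴴ * Pb := by
      rw [sub_kron, Matrix.mul_sub, Matrix.sub_mul, Matrix.sub_mul]
    have hpos : 0 ≤ (E * ((Y - X) ⊗ₖ PR a) * Eᴴ * Pb).trace.re :=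
      trace_mul_psd_re_nonneg
        ((kron_posSemidef hXY (hPRpsd a)).mul_mul_conjTranspose_same E) hPbpsd
    rw [hdiff, Matrix.trace_sub, Complex.sub_re] at hpos
    linarith
  set c0 : ℂ := (E * ((1 : Matrix nS nS ℂ) ⊗ₖ PR a) * Eᴴ * Pb).trace with hc0
  set d0 : ℂ := (E * (νS ⊗ₖ PR a) * Eᴴ * Pb).trace with hd0
  have hNr : (0 : ℝ) < (Fintype.card nS : ℝ) := by
    exact_mod_cast Fintype.card_pos
  -- re of the two ttm values
  have reν : (ttm H (fun c => (1 : Matrix nS nS ℂ) ⊗ₖ PR c) (νS ⊗ₖ ωR) t b a).re =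
      μ a * d0.re := by
    have := httm νS 1
    rw [one_smul] at this
    rw [this, one_mul, ← hd0, Complex.re_ofReal_mul]
  have reω : (ttm H (fun c => (1 : Matrix nS nS ℂ) ⊗ₖ PR c)
      (((Fintype.card nS : ℂ))⁻¹ • ((1 : Matrix nS nS ℂ) ⊗ₖ ωR)) t b a).re =
      ((Fintype.card nS : ℝ))⁻¹ * μ a * c0.re := by
    have := httm 1 ((Fintype.card nS : ℂ))⁻¹
    rw [this, ← hc0]
    have hcast : ((Fintype.card nS : ℂ))⁻¹ * (μ a : ℂ) =
        (((((Fintype.card nS : ℝ))⁻¹ * μ a : ℝ)) : ℂ) := by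
      push_cast
      ring
    rw [hcast, Complex.re_ofReal_mul]
  -- the two estimates
  have hdc : d0.re ≤ c0.re := hmono νS 1 (one_sub_posSemidef hνS hνStr)
  constructor
  · rw [reν, reω]
    have hμa := (hμpos a).le
    have hN : (Fintype.card nS : ℝ) * ((Fintype.card nS : ℝ)⁻¹ * μ a * c0.re) =
        μ a * c0.re := by
      field_simp
    rw [hN]
    nlinarith
  · intro γ hγ hγpsd
    rw [reν, reω]
    have hγc : γ * c0.re ≤ d0.re := by
      have h := hmono ((γ : ℂ) • (1 : Matrix nS nS ℂ)) νS hγpsd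
      have heq : (E * (((γ : ℂ) • (1 : Matrix nS nS ℂ)) ⊗ₖ PR a) * Eᴴ * Pb).trace =
          (γ : ℂ) * c0 := by
        rw [Matrix.smul_kronecker, mul_smul_comm, smul_mul_assoc, smul_mul_assoc,
          Matrix.trace_smul, smul_eq_mul, hc0]
      rw [heq, Complex.re_ofReal_mul] at h
      exact h
    have hμa := (hμpos a).le
    have hN : γ * (Fintype.card nS : ℝ) * ((Fintype.card nS : ℝ)⁻¹ * μ a * c0.re) =
        γ * (μ a * c0.re) := by
      field_simp
    rw [hN]
    nlinarith
end
end
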